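/- For every a > 1/(h_1·√P) and every feasible b, there exist a′ with 0 ≤ a′ ≤ 1/(h_1·√P) and a feasible b′ such that MSE(a′, b′) < MSE(a, b). Consequently, any global minimizer (a*, b*) of MSE over a ≥ 0 and feasible b satisfies a* ∉ 𝒮_0, i.e., a* ≤ 1/(h_1·√P), so at least one sensor transmits with maximum power. -/

import Mathlib

open Finset

/-- The computation MSE of the AirComp system. -/
noncomputable def MSE (K : ℕ) (h : ℕ → ℝ) (σ : ℝ) (a : ℝ) (b : ℕ → ℝ) : ℝ :=
  (∑ k ∈ Finset.Icc 1 K, (a * h k * b k - 1) ^ 2) + σ ^ 2 * a ^ 2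

/-- Feasibility of the Tx-scaling factors: `0 ≤ b_k ≤ √P` for all `1 ≤ k ≤ K`. -/
def feasible (K : ℕ) (P : ℝ) (b : ℕ → ℝ) : Prop :=
  ∀ k, 1 ≤ k → k ≤ K → 0 ≤ b k ∧ b k ≤ Real.sqrt P

theorem stmt_3 (K : ℕ) (hK : 1 ≤ K) (h : ℕ → ℝ) (P σ : ℝ) (hP : 0 < P) (hσ : 0 < σ)
    (hpos : 0 < h 1) (hmono : ∀ k, 1 ≤ k → k < K → h k ≤ h (k + 1)) :
    -- for every `a ∈ 𝒮₀` and feasible `b` there is a strictly better pair with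
    -- `0 ≤ a' ≤ 1/(h₁√P)`
    (∀ a : ℝ, 1 / (h 1 * Real.sqrt P) < a → ∀ b : ℕ → ℝ, feasible K P b →
      ∃ a' : ℝ, 0 ≤ a' ∧ a' ≤ 1 / (h 1 * Real.sqrt P) ∧
        ∃ b' : ℕ → ℝ, feasible K P b' ∧ MSE K h σ a' b' < MSE K h σ a b) ∧
    -- consequently, any global minimizer over `a ≥ 0` and feasible `b` has
    -- `a* ≤ 1/(h₁√P)`, i.e. `a* ∉ 𝒮₀`
    (∀ astar : ℝ, ∀ bstar : ℕ → ℝ, 0 ≤ astar → feasible K P bstar →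
      (∀ a : ℝ, 0 ≤ a → ∀ b : ℕ → ℝ, feasible K P b →
        MSE K h σ astar bstar ≤ MSE K h σ a b) →
      astar ≤ 1 / (h 1 * Real.sqrt P)) := by
  have hsp : 0 < Real.sqrt P := Real.sqrt_pos.mpr hP
  have hden : 0 < h 1 * Real.sqrt P := mul_pos hpos hsp
  have ha' : 0 < 1 / (h 1 * Real.sqrt P) := by positivity
  -- monotonicity: h 1 ≤ h k for 1 ≤ k ≤ K
  have hge : ∀ k, 1 ≤ k → k ≤ K → h 1 ≤ h k := by
    intro k hk1 hkK
    induction k with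
    | zero => omega
    | succ n ih =>
      rcases Nat.eq_or_lt_of_le hk1 with he | hl
      · rw [← he]
      · have hn1 : 1 ≤ n := by omega
        have hnK : n < K := by omega
        exact le_trans (ih hn1 (by omega)) (hmono n hn1 hnK)
  have hposk : ∀ k, 1 ≤ k → k ≤ K → 0 < h k := fun k hk1 hkK =>
    lt_of_lt_of_le hpos (hge k hk1 hkK)
  have main : ∀ a : ℝ, 1 / (h 1 * Real.sqrt P) < a → ∀ b : ℕ → ℝ, feasible K P b →
      ∃ a' : ℝ, 0 ≤ a' ∧ a' ≤ 1 / (h 1 * Real.sqrt P) ∧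
        ∃ b' : ℕ → ℝ, feasible K P b' ∧ MSE K h σ a' b' < MSE K h σ a b := by
    intro a ha b hb
    set a' : ℝ := 1 / (h 1 * Real.sqrt P) with ha'def
    refine ⟨a', le_of_lt ha', le_refl _, fun k => h 1 * Real.sqrt P / h k, ?_, ?_⟩
    · intro k hk1 hkK
      have hk : 0 < h k := hposk k hk1 hkK
      constructor
      · positivity
      · rw [div_le_iff₀ hk]
        have := hge k hk1 hkK
        calc h 1 * Real.sqrt P = Real.sqrt P * h 1 := by ring
          _ ≤ Real.sqrt P * h k := by
              exact mul_le_mul_of_nonneg_left this (le_of_lt hsp)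
    · have hterm : ∀ k ∈ Finset.Icc 1 K,
          (a' * h k * (h 1 * Real.sqrt P / h k) - 1) ^ 2 = 0 := by
        intro k hk
        rw [Finset.mem_Icc] at hk
        have hkne : h k ≠ 0 := ne_of_gt (hposk k hk.1 hk.2)
        have : a' * h k * (h 1 * Real.sqrt P / h k) = 1 := by
          field_simp [ha'def]
          rw [ha'def, one_div, mul_assoc, inv_mul_cancel₀ hden.ne']
        rw [this]; ring
      have h1 : MSE K h σ a' (fun k => h 1 * Real.sqrt P / h k) = σ ^ 2 * a' ^ 2 := by
        unfold MSE
        rw [Finset.sum_eq_zero hterm, zero_add]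
      rw [h1]
      have h2 : σ ^ 2 * a' ^ 2 < σ ^ 2 * a ^ 2 := by
        apply mul_lt_mul_of_pos_left _ (by positivity)
        exact pow_lt_pow_left₀ ha (le_of_lt ha') (by norm_num)
      calc σ ^ 2 * a' ^ 2 < σ ^ 2 * a ^ 2 := h2
        _ ≤ MSE K h σ a b := by
            unfold MSE
            have : (0:ℝ) ≤ ∑ k ∈ Finset.Icc 1 K, (a * h k * b k - 1) ^ 2 :=
              Finset.sum_nonneg fun k _ => sq_nonneg _
            linarith
  refine ⟨main, ?_⟩
  intro astar bstar hast hbf hmin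
  by_contra hc
  push_neg at hc
  obtain ⟨a', ha'0, ha'le, b', hb'f, hlt⟩ := main astar hc bstar hbf
  exact absurd (hmin a' ha'0 b' hb'f) (not_le.mpr hlt)
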